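/- Suppose x ∈ H satisfies ‖Df⁻ⁿ|_{F(x)}‖ ≥ γ₂ⁿ for all n ≥ 0 where F is one-dimensional (equivalently, with a_i = log‖Df⁻¹|_{F(f^{-i}x)}‖, the sums ∑_{i=0}^{n-1} a_i ≥ n log γ₂). Then for any γ₂ < γ' < 1 there exist infinitely many Pliss times: integers n such that ∑_{i=m}^{n-1} a_i ≥ (n−m) log γ' for all 0 ≤ m ≤ n. (Pliss' Lemma for real sequences.) -/

import Mathlib

/-- Pliss' Lemma for real sequences: if `(a i)` is bounded above by `K` and all initial
sums satisfy `∑_{i<n} a i ≥ n·c`, then for any `c' < c` there are infinitely many Pliss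
times `n`, i.e. times such that `∑_{i∈[m,n)} a i ≥ (n-m)·c'` for all `0 ≤ m ≤ n`. -/
theorem stmt4 (a : ℕ → ℝ) (K c c' : ℝ)
    (hK : ∀ i, a i ≤ K)
    (hsum : ∀ n : ℕ, 1 ≤ n → (n : ℝ) * c ≤ ∑ i ∈ Finset.range n, a i)
    (hc' : c' < c) :
    ∀ N : ℕ, ∃ n : ℕ, N ≤ n ∧
      ∀ m : ℕ, m ≤ n → ((n : ℝ) - (m : ℝ)) * c' ≤ ∑ i ∈ Finset.Ico m n, a i := by
  intro N
  set S : ℕ → ℝ := fun n => ∑ i ∈ Finset.range n, (a i - c') with hSdef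
  have hcc : 0 < c - c' := by linarith
  have hgrow : ∀ n : ℕ, 1 ≤ n → (n : ℝ) * (c - c') ≤ S n := by
    intro n hn
    have h1 := hsum n hn
    have h2 : S n = (∑ i ∈ Finset.range n, a i) - (n : ℝ) * c' := by
      simp [hSdef, Finset.sum_sub_distrib, mul_comm]
    rw [h2]; nlinarith
  obtain ⟨m0, hm0mem, hm0⟩ := Finset.exists_max_image (Finset.range (N + 1)) S
    ⟨0, by simp⟩
  obtain ⟨T, hT⟩ := exists_nat_gt (S m0 / (c - c'))
  set T' : ℕ := max (max T 1) N with hT'def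
  have hT'1 : 1 ≤ T' := le_trans (le_max_right T 1) (le_max_left _ N)
  have hTT' : T ≤ T' := le_trans (le_max_left T 1) (le_max_left _ N)
  have hST' : S m0 < S T' := by
    have h1 : (T : ℝ) * (c - c') ≤ (T' : ℝ) * (c - c') := by
      have : (T : ℝ) ≤ (T' : ℝ) := Nat.cast_le.mpr hTT'
      nlinarith
    have h2 := hgrow T' hT'1
    have h3 : S m0 < (T : ℝ) * (c - c') := by
      rw [div_lt_iff₀ hcc] at hT; linarith
    linarith
  obtain ⟨n, hnmem, hn⟩ := Finset.exists_max_image (Finset.range (T' + 1)) S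
    ⟨0, by simp⟩
  have hnT' : n ≤ T' := Nat.lt_succ_iff.mp (Finset.mem_range.mp hnmem)
  have hSTn : S T' ≤ S n := hn T' (Finset.mem_range.mpr (Nat.lt_succ_self _))
  refine ⟨n, ?_, ?_⟩
  · by_contra h
    push_neg at h
    have : S n ≤ S m0 := hm0 n (Finset.mem_range.mpr (by omega))
    linarith
  · intro m hm
    have hSm : S m ≤ S n := hn m (Finset.mem_range.mpr (by omega))
    have key : ∑ i ∈ Finset.Ico m n, (a i - c') = S n - S m := by
      exact Finset.sum_Ico_eq_sub (fun i => a i - c') hm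
    have hsplit : ∑ i ∈ Finset.Ico m n, (a i - c')
        = (∑ i ∈ Finset.Ico m n, a i) - ((n : ℝ) - (m : ℝ)) * c' := by
      rw [Finset.sum_sub_distrib, Finset.sum_const, Nat.card_Ico, nsmul_eq_mul,
        Nat.cast_sub hm]
    have : (0 : ℝ) ≤ ∑ i ∈ Finset.Ico m n, (a i - c') := by rw [key]; linarith
    linarith [hsplit ▸ this]
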